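/- Let γ = (α, σ) : ℝ → E × ℝ be a gradient flow line of the split interpolation function F. If σ(t₀) = 0 for some t₀, or σ(t₀) = 1 for some t₀, then σ is constant (identically 0, respectively identically 1) and α : ℝ → E is a gradient flow line of f. In particular, gradient flow lines of F through a point of the slice E × {1} remain in E × {1} and correspond exactly to gradient flow lines of f. -/

import Mathlib

open Filter Topology

/-- The interpolation profile `h(s) = s³ - (3/2)s²`. -/
noncomputable def hfun (s : ℝ) : ℝ := s ^ 3 - (3 / 2) * s ^ 2

/-- The split interpolation function `F(x,s) = f(x) + C·h(s)` on `E × ℝ`, where `E × ℝ`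
carries the product (L²) inner product. -/
noncomputable def Fsplit {E : Type*} [NormedAddCommGroup E] [InnerProductSpace ℝ E]
    (f : E → ℝ) (C : ℝ) (p : WithLp 2 (E × ℝ)) : ℝ :=
  f ((WithLp.equiv 2 (E × ℝ)) p).1 + C * hfun ((WithLp.equiv 2 (E × ℝ)) p).2


section aux

variable {E : Type*} [NormedAddCommGroup E] [InnerProductSpace ℝ E] [CompleteSpace E]

lemma hfun_deriv (s : ℝ) : HasDerivAt hfun (3 * s ^ 2 - 3 * s) s := by
  have h := ((hasDerivAt_pow 3 s).sub ((hasDerivAt_pow 2 s).const_mul (3 / 2 : ℝ)))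
  have e : hfun = ((fun x => x^3) - fun y => 3/2*y^2) := by funext y; simp [hfun]
  rw [e]
  exact h.congr_deriv (by push_cast; ring)

lemma grad_Fsplit (f : E → ℝ) (hf : Differentiable ℝ f) (C : ℝ) (x : E) (s : ℝ) :
    HasGradientAt (Fsplit f C)
      ((WithLp.equiv 2 (E × ℝ)).symm (gradient f x, C * (3 * s ^ 2 - 3 * s)))
      ((WithLp.equiv 2 (E × ℝ)).symm (x, s)) := by
  set e := WithLp.prodContinuousLinearEquiv 2 ℝ E ℝ with he
  set p := (WithLp.equiv 2 (E × ℝ)).symm (x, s) with hp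
  set L : WithLp 2 (E × ℝ) →L[ℝ] E :=
    (ContinuousLinearMap.fst ℝ E ℝ).comp e.toContinuousLinearMap with hL
  set M : WithLp 2 (E × ℝ) →L[ℝ] ℝ :=
    (ContinuousLinearMap.snd ℝ E ℝ).comp e.toContinuousLinearMap with hM
  have hLp : L p = x := rfl
  have hMp : M p = s := rfl
  have h1 : HasFDerivAt (fun q => f (L q))
      ((InnerProductSpace.toDual ℝ E (gradient f x)).comp L) p := by
    have := ((hf x).hasGradientAt.hasFDerivAt).comp p L.hasFDerivAt
    exact this
  have h2 : HasFDerivAt (fun q => C * hfun (M q)) ((C * (3 * s ^ 2 - 3 * s)) • M) p := by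
    have h3 : HasFDerivAt (fun q => hfun (M q)) ((3 * s ^ 2 - 3 * s) • M) p :=
      by have := (hfun_deriv s).comp_hasFDerivAt p M.hasFDerivAt; exact this
    have := h3.const_mul C
    rw [smul_smul] at this
    exact this
  have hsum := h1.add h2
  have hD : (InnerProductSpace.toDual ℝ (WithLp 2 (E × ℝ)))
      ((WithLp.equiv 2 (E × ℝ)).symm (gradient f x, C * (3 * s ^ 2 - 3 * s)))
      = (InnerProductSpace.toDual ℝ E (gradient f x)).comp L + (C * (3 * s ^ 2 - 3 * s)) • M := by
    ext v
    simp only [InnerProductSpace.toDual_apply_apply, WithLp.prod_inner_apply, RCLike.inner_apply,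
      WithLp.equiv_symm_apply, WithLp.toLp_fst, WithLp.toLp_snd, ContinuousLinearMap.add_apply,
      ContinuousLinearMap.coe_comp', Function.comp_apply, ContinuousLinearMap.coe_smul',
      Pi.smul_apply, smul_eq_mul, RCLike.conj_to_real, conj_trivial]
    have hLv : L v = v.ofLp.1 := rfl
    have hMv : M v = v.ofLp.2 := rfl
    rw [hLv, hMv]
    try ring
  rw [hasGradientAt_iff_hasFDerivAt, hD]
  exact hsum

end aux

set_option maxHeartbeats 1000000 in
/-- If the ℝ-component `σ` of a gradient flow line `γ = (α, σ)` of the split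
interpolation function `F` takes the value `0` (resp. `1`) somewhere, then `σ` is
identically `0` (resp. `1`) and `α` is a gradient flow line of `f`. -/
theorem flow_in_slice {E : Type*} [NormedAddCommGroup E] [InnerProductSpace ℝ E]
    [CompleteSpace E] (f : E → ℝ) (hf : Differentiable ℝ f) (C : ℝ) (hC : 0 < C)
    (α : ℝ → E) (σ : ℝ → ℝ)
    (hflow : ∀ t : ℝ, HasDerivAt (fun u => (WithLp.equiv 2 (E × ℝ)).symm (α u, σ u))
        (-(gradient (Fsplit f C) ((WithLp.equiv 2 (E × ℝ)).symm (α t, σ t)))) t) :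
    ((∃ t₀ : ℝ, σ t₀ = 0) →
      (∀ t : ℝ, σ t = 0) ∧ ∀ t : ℝ, HasDerivAt α (-(gradient f (α t))) t) ∧
    ((∃ t₀ : ℝ, σ t₀ = 1) →
      (∀ t : ℝ, σ t = 1) ∧ ∀ t : ℝ, HasDerivAt α (-(gradient f (α t))) t) := by
  have key : ∀ t, gradient (Fsplit f C) ((WithLp.equiv 2 (E × ℝ)).symm (α t, σ t)) =
      (WithLp.equiv 2 (E × ℝ)).symm (gradient f (α t), C * (3 * (σ t) ^ 2 - 3 * σ t)) :=
    fun t => (grad_Fsplit f hf C (α t) (σ t)).gradient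
  set e := WithLp.prodContinuousLinearEquiv 2 ℝ E ℝ with he
  set L : WithLp 2 (E × ℝ) →L[ℝ] E :=
    (ContinuousLinearMap.fst ℝ E ℝ).comp e.toContinuousLinearMap with hL
  set M : WithLp 2 (E × ℝ) →L[ℝ] ℝ :=
    (ContinuousLinearMap.snd ℝ E ℝ).comp e.toContinuousLinearMap with hM
  have hα : ∀ t, HasDerivAt α (-(gradient f (α t))) t := by
    intro t
    have h := L.hasFDerivAt.comp_hasDerivAt t (hflow t)
    rw [key t] at h
    have h2 : L (-((WithLp.equiv 2 (E × ℝ)).symm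
        (gradient f (α t), C * (3 * (σ t) ^ 2 - 3 * σ t)))) = -(gradient f (α t)) := by
      rw [map_neg]; rfl
    rw [h2] at h
    exact h
  have hσ : ∀ t, HasDerivAt σ (-(C * (3 * (σ t) ^ 2 - 3 * σ t))) t := by
    intro t
    have h := M.hasFDerivAt.comp_hasDerivAt t (hflow t)
    rw [key t] at h
    have h2 : M (-((WithLp.equiv 2 (E × ℝ)).symm
        (gradient f (α t), C * (3 * (σ t) ^ 2 - 3 * σ t)))) =
        -(C * (3 * (σ t) ^ 2 - 3 * σ t)) := by
      rw [map_neg]; rfl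
    rw [h2] at h
    exact h
  -- the ODE for σ
  set v : ℝ → ℝ → ℝ := fun _ y => -(C * (3 * y ^ 2 - 3 * y)) with hv
  have hσv : ∀ t, HasDerivAt σ (v t (σ t)) t := hσ
  set K : NNReal := ⟨9 * C, by positivity⟩ with hK
  have hlip : ∀ t : ℝ, LipschitzOnWith K (v t) (Set.Icc (-1 : ℝ) 2) := by
    intro t
    rw [lipschitzOnWith_iff_dist_le_mul]
    intro a ha b hb
    rw [Real.dist_eq, Real.dist_eq]
    have h1 : v t a - v t b = (-(3 * C * (a + b - 1))) * (a - b) := by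
      simp only [hv]; ring
    have hab : |a + b - 1| ≤ 3 :=
      abs_le.2 ⟨by linarith [ha.1, hb.1], by linarith [ha.2, hb.2]⟩
    have e1 : |v t a - v t b| = 3 * C * (|a + b - 1| * |a - b|) := by
      rw [h1, abs_mul, abs_neg, abs_mul, abs_of_pos (by positivity : (0:ℝ) < 3 * C)]
      ring
    have hKc : (K : ℝ) = 9 * C := rfl
    rw [e1, hKc]
    nlinarith [abs_nonneg (a - b), mul_le_mul_of_nonneg_right hab (abs_nonneg (a - b)),
      abs_nonneg (a + b - 1)]
  have hcont : Continuous σ := by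
    rw [continuous_iff_continuousAt]; exact fun t => (hσ t).continuousAt
  have const_eq : ∀ c : ℝ, c ∈ Set.Ioo (-1 : ℝ) 2 → v 0 c = 0 →
      (∃ t₀, σ t₀ = c) → ∀ t, σ t = c := by
    rintro c hcIoo hc0 ⟨t₀, ht₀⟩
    have hvc : ∀ t : ℝ, v t c = 0 := fun _ => hc0
    set S := {t : ℝ | σ t = c} with hS
    have hclosed : IsClosed S := isClosed_eq hcont continuous_const
    have hopen : IsOpen S := by
      rw [isOpen_iff_mem_nhds]
      intro t₁ ht₁
      have ht₁' : σ t₁ = c := ht₁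
      have hmem : ∀ᶠ t in 𝓝 t₁, σ t ∈ Set.Icc (-1 : ℝ) 2 := by
        have h3 : ∀ᶠ t in 𝓝 t₁, σ t ∈ Set.Ioo (-1 : ℝ) 2 :=
          hcont.continuousAt.preimage_mem_nhds (isOpen_Ioo.mem_nhds (ht₁' ▸ hcIoo))
        exact h3.mono fun t ht => Set.Ioo_subset_Icc_self ht
      have huniq : σ =ᶠ[𝓝 t₁] fun _ => c := by
        refine ODE_solution_unique_of_eventually (Filter.Eventually.of_forall hlip)
          (hmem.mono fun t ht => ⟨hσv t, ht⟩)
          (Filter.Eventually.of_forall fun t =>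
            ⟨by simpa [hvc t] using hasDerivAt_const t c, Set.Ioo_subset_Icc_self hcIoo⟩)
          ht₁'
      exact huniq
    have hall : S = Set.univ := IsClopen.eq_univ ⟨hclosed, hopen⟩ ⟨t₀, ht₀⟩
    intro t
    have : t ∈ S := hall ▸ Set.mem_univ t
    exact this
  constructor
  · intro h0
    exact ⟨const_eq 0 (by norm_num) (by simp [hv]) h0, hα⟩
  · intro h1
    exact ⟨const_eq 1 (by norm_num) (by norm_num [hv]) h1, hα⟩
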